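/- arXiv:1207.7197 — 2 statements merged into one kernel-verified Lean document; each statement's English description precedes it below -/
import Mathlib

section
/- Let ζ ∈ V_{*,≤ℓ*(ℓ*−1)+1} with H(ζ) = Γ*, and let O(ζ) be the set of optimal paths from □ to ⊞ that visit ζ. If every path in O(ζ) visits g({□}, V_{*,ℓ*(ℓ*−1)+1}^min) after visiting ζ, then ζ is unessential. -/
noncomputable section

namespace TwoTypeKawasaki

/-- Lattice sites of `ℤ²`. -/
abbrev Site := ℤ × ℤ

/-- Nearest-neighbour adjacency in `ℤ²`. -/
def Adj (x y : Site) : Prop := |x.1 - y.1| + |x.2 - y.2| = 1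

/-- The box `Λ`: an `(L+3/2) × (L+3/2)` square in dual coordinates
(`u₁ = (x₁-x₂)/2`, `u₂ = (x₁+x₂)/2`), i.e. a rhombus in standard coordinates. -/
def inLam (L : ℕ) (x : Site) : Prop :=
  -((L : ℤ) + 1) ≤ x.1 - x.2 ∧ x.1 - x.2 ≤ (L : ℤ) + 2 ∧
    -((L : ℤ) + 1) ≤ x.1 + x.2 ∧ x.1 + x.2 ≤ (L : ℤ) + 2

/-- `Λ⁻ = Λ \ ∂⁻Λ`. -/
def inLam1 (L : ℕ) (x : Site) : Prop := inLam L x ∧ ∀ y, Adj x y → inLam L y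

/-- `(Λ⁻)⁻`. -/
def inLam2 (L : ℕ) (x : Site) : Prop := inLam1 L x ∧ ∀ y, Adj x y → inLam1 L y

/-- The internal boundary `∂⁻Λ`. -/
def inBd (L : ℕ) (x : Site) : Prop := inLam L x ∧ ¬ inLam1 L x

/-- Euclidean distance `> 2` from every site of `∂⁻Λ`. -/
def FarFromBd (L : ℕ) (x : Site) : Prop :=
  ∀ z : Site, inBd L z → 4 < (x.1 - z.1) ^ 2 + (x.2 - z.2) ^ 2

/-- A configuration: `0` = empty, `1` = particle of type 1, `2` = particle of type 2;
empty outside `Λ`. -/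
def Config (L : ℕ) : Type := {η : Site → Fin 3 // ∀ x, ¬ inLam L x → η x = 0}

/-- An active bond: a nearest-neighbour pair of particles of different types, both sites
at distance at least 3 from the internal boundary. -/
def activeBond (L : ℕ) (η : Config L) (x y : Site) : Prop :=
  Adj x y ∧ FarFromBd L x ∧ FarFromBd L y ∧
    ((η.1 x = 1 ∧ η.1 y = 2) ∨ (η.1 x = 2 ∧ η.1 y = 1))

/-- Number of particles of a given type. -/
def numType (L : ℕ) (η : Config L) (v : Fin 3) : ℕ := {x : Site | η.1 x = v}.ncard

def numParticles (L : ℕ) (η : Config L) : ℕ := numType L η 1 + numType L η 2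

/-- Number of ordered pairs forming an active bond (twice the number of bonds). -/
def numBondPairs (L : ℕ) (η : Config L) : ℕ :=
  {q : Site × Site | activeBond L η q.1 q.2}.ncard

/-- The Hamiltonian `H = -U·B + Δ₁·n₁ + Δ₂·n₂`. -/
def H (U Δ1 Δ2 : ℝ) (L : ℕ) (η : Config L) : ℝ :=
  -U * (numBondPairs L η : ℝ) / 2 + Δ1 * (numType L η 1 : ℝ) + Δ2 * (numType L η 2 : ℝ)

/-- An allowed move of the Kawasaki dynamics: exchange of a particle with a hole between
two neighbouring sites of `Λ`, or creation/annihilation of a particle in `∂⁻Λ`. -/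
def Move (L : ℕ) (η η' : Config L) : Prop :=
  (∃ x y : Site, Adj x y ∧ inLam L x ∧ inLam L y ∧
      ((η.1 x = 0 ∧ η.1 y ≠ 0) ∨ (η.1 x ≠ 0 ∧ η.1 y = 0)) ∧
      η'.1 x = η.1 y ∧ η'.1 y = η.1 x ∧ ∀ z, z ≠ x → z ≠ y → η'.1 z = η.1 z) ∨
  (∃ x : Site, inBd L x ∧
      ((η.1 x = 0 ∧ η'.1 x ≠ 0) ∨ (η.1 x ≠ 0 ∧ η'.1 x = 0)) ∧
      ∀ z, z ≠ x → η'.1 z = η.1 z)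

/-- A path of allowed moves from `η` to `η'`. -/
def IsPath (L : ℕ) (ω : List (Config L)) (η η' : Config L) : Prop :=
  ω ≠ [] ∧ ω.head? = some η ∧ ω.getLast? = some η' ∧ ω.Chain' (Move L)

/-- Maximal energy along a path. -/
def maxH (U Δ1 Δ2 : ℝ) (L : ℕ) (ω : List (Config L)) : ℝ :=
  WithBot.unbotD 0 ((ω.map (H U Δ1 Δ2 L)).maximum)

/-- Communication height between two sets of configurations. -/
def PhiSet (U Δ1 Δ2 : ℝ) (L : ℕ) (A B : Set (Config L)) : ℝ :=
  sInf {m : ℝ | ∃ η ∈ A, ∃ η' ∈ B, ∃ ω, IsPath L ω η η' ∧ maxH U Δ1 Δ2 L ω = m}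

/-- Communication height between two configurations. -/
def Phi (U Δ1 Δ2 : ℝ) (L : ℕ) (η η' : Config L) : ℝ := PhiSet U Δ1 Δ2 L {η} {η'}

/-- The empty configuration `□`. -/
def emptyConfig (L : ℕ) : Config L := ⟨fun _ => 0, fun _ _ => rfl⟩

/-- A particle of type 2 with four active bonds. -/
def Saturated (L : ℕ) (η : Config L) (x : Site) : Prop :=
  η.1 x = 2 ∧ ∀ y, Adj x y → activeBond L η x y

/-- A 2-tiled configuration: every particle of type 2 is saturated and there are no
non-interacting particles of type 1. -/
def Tiled (L : ℕ) (η : Config L) : Prop :=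
  (∀ x, η.1 x = 2 → Saturated L η x) ∧ (∀ x, η.1 x = 1 → ∃ y, activeBond L η x y)

/-- `⊞`: the configurations in which `Λ` carries the largest possible checkerboard
droplet with every particle of type 2 surrounded by particles of type 1. -/
def BoxPlus (L : ℕ) : Set (Config L) :=
  {η | Tiled L η ∧ ∀ η' : Config L, Tiled L η' → numType L η' 2 ≤ numType L η 2}

/-- `Γ* = Φ(□, ⊞)`. -/
def Gamma (U Δ1 Δ2 : ℝ) (L : ℕ) : ℝ := PhiSet U Δ1 Δ2 L {emptyConfig L} (BoxPlus L)

/-- An optimal path from `□` to `⊞`: one realizing the minimax `Γ*`. -/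
def OptPath (U Δ1 Δ2 : ℝ) (L : ℕ) (ω : List (Config L)) : Prop :=
  ∃ b ∈ BoxPlus L, IsPath L ω (emptyConfig L) b ∧ maxH U Δ1 Δ2 L ω = Gamma U Δ1 Δ2 L

/-- A saddle: a configuration at energy `Γ*` on some optimal path. -/
def Saddle (U Δ1 Δ2 : ℝ) (L : ℕ) (ζ : Config L) : Prop :=
  H U Δ1 Δ2 L ζ = Gamma U Δ1 Δ2 L ∧ ∃ ω, OptPath U Δ1 Δ2 L ω ∧ ζ ∈ ω

/-- A gate: a set of saddles met by every optimal path. -/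
def IsGate (U Δ1 Δ2 : ℝ) (L : ℕ) (W : Set (Config L)) : Prop :=
  (∀ ζ ∈ W, Saddle U Δ1 Δ2 L ζ) ∧ ∀ ω, OptPath U Δ1 Δ2 L ω → ∃ ζ ∈ W, ζ ∈ ω

/-- A minimal gate: a gate such that every proper subset is avoided by some optimal path. -/
def IsMinGate (U Δ1 Δ2 : ℝ) (L : ℕ) (W : Set (Config L)) : Prop :=
  IsGate U Δ1 Δ2 L W ∧
    ∀ W' : Set (Config L), W' ⊂ W → ∃ ω, OptPath U Δ1 Δ2 L ω ∧ ∀ ζ ∈ W', ζ ∉ ω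

/-- The essential gate `G(□,⊞)`: the union of all minimal gates. -/
def EssGate (U Δ1 Δ2 : ℝ) (L : ℕ) : Set (Config L) :=
  {ζ | ∃ W, IsMinGate U Δ1 Δ2 L W ∧ ζ ∈ W}

/-- `η` is the first configuration of the path `ω` lying in `Y`. -/
def FirstIn {C : Type*} (ω : List C) (Y : Set C) (η : C) : Prop :=
  ∃ (i : ℕ) (h : i < ω.length), ω.get ⟨i, h⟩ = η ∧ η ∈ Y ∧
    ∀ (j : ℕ) (hj : j < i), ω.get ⟨j, hj.trans h⟩ ∉ Y

/-- `η` is the configuration of `ω` visited just prior to the first entrance of `Y`. -/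
def PrevFirstIn {C : Type*} (ω : List C) (Y : Set C) (η : C) : Prop :=
  ∃ (i : ℕ) (h : i + 1 < ω.length), ω.get ⟨i, Nat.lt_of_succ_lt h⟩ = η ∧
    ω.get ⟨i + 1, h⟩ ∈ Y ∧
    ∀ (j : ℕ) (hj : j < i + 1), ω.get ⟨j, lt_trans hj h⟩ ∉ Y

/-- `ω` enters the set `Y` via the configuration `η` (at some entrance: `η ∈ Y` and the
configuration visited just before, if any, is not in `Y`). -/
def EntryAt {C : Type*} (ω : List C) (Y : Set C) (η : C) : Prop :=
  ∃ (i : ℕ) (h : i < ω.length), ω.get ⟨i, h⟩ = η ∧ η ∈ Y ∧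
    ∀ (j : ℕ) (hj : j + 1 = i), ω.get ⟨j, by omega⟩ ∉ Y

/-- `C_bd`: the minimal set of configurations in the essential gate through which all
optimal paths first enter the essential gate (= the set of first entrances). -/
def Cbd (U Δ1 Δ2 : ℝ) (L : ℕ) : Set (Config L) :=
  {η | ∃ ω, OptPath U Δ1 Δ2 L ω ∧ FirstIn ω (EssGate U Δ1 Δ2 L) η}

/-- `P`: the protocritical droplets, i.e. configurations visited by optimal paths just
prior to their first entrance of the essential gate. -/
def Pset (U Δ1 Δ2 : ℝ) (L : ℕ) : Set (Config L) :=
  {η | ∃ ω, OptPath U Δ1 Δ2 L ω ∧ PrevFirstIn ω (EssGate U Δ1 Δ2 L) η}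

open Classical in
/-- Change the value of a configuration at a site of `Λ`. -/
def setSite (L : ℕ) (η : Config L) (x : Site) (v : Fin 3) : Config L :=
  if hx : inLam L x then
    ⟨Function.update η.1 x v, fun z hz => by
      have hzx : z ≠ x := fun h => hz (h ▸ hx)
      simpa [Function.update_apply, hzx] using η.2 z hz⟩
  else η

/-- `D^{bd2}`: configurations obtained from a configuration in `D` by adding one particle
of type 2 at a site of `∂⁻Λ`. -/
def bd2 (L : ℕ) (D : Set (Config L)) : Set (Config L) :=
  {η' | ∃ η ∈ D, ∃ x : Site, inBd L x ∧ η.1 x = 0 ∧ η' = setSite L η x 2}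

/-- Number of particles of type 2 in `(Λ⁻)⁻`. -/
def n2in (L : ℕ) (η : Config L) : ℕ := {x : Site | inLam2 L x ∧ η.1 x = 2}.ncard

/-- The manifold `V_{*,n}`. -/
def Vman (L : ℕ) (n : ℕ) : Set (Config L) := {η | n2in L η = n}

/-- The configurations of minimal energy in `V_{*,n}`. -/
def VmanMin (U Δ1 Δ2 : ℝ) (L : ℕ) (n : ℕ) : Set (Config L) :=
  {η | η ∈ Vman L n ∧ ∀ η' ∈ Vman L n, H U Δ1 Δ2 L η ≤ H U Δ1 Δ2 L η'}

/-- `g(A,B)`. -/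
def gset (U Δ1 Δ2 : ℝ) (L : ℕ) (A B : Set (Config L)) : Set (Config L) :=
  {η | η ∈ B ∧ ∃ ζ ∈ A, ∃ ω, IsPath L ω ζ η ∧ ∀ ξ ∈ ω,
    numType L η 2 ≤ numType L ξ 2 ∧ numType L ξ 2 ≤ numType L ζ 2 ∧
      H U Δ1 Δ2 L ξ < Gamma U Δ1 Δ2 L}

/-- `ḡ(A,B)`. -/
def gbar (U Δ1 Δ2 : ℝ) (L : ℕ) (A B : Set (Config L)) : Set (Config L) :=
  {η | η ∈ B ∧ ∃ ζ ∈ A, ∃ ω, IsPath L ω ζ η ∧ ∀ ξ ∈ ω,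
    numType L η 2 ≤ numType L ξ 2 ∧ numType L ξ 2 ≤ numType L ζ 2 ∧
      H U Δ1 Δ2 L ξ ≤ Gamma U Δ1 Δ2 L}

/-- `ℓ* = ⌈Δ₁/ε⌉` with `ε = 4U - Δ₁ - Δ₂`. -/
def lstar (U Δ1 Δ2 : ℝ) : ℕ := ⌈Δ1 / (4 * U - Δ1 - Δ2)⌉₊

/-- Adjacency of dual unit squares (of 2-tiles). -/
def dualAdj (x y : Site) : Prop := |x.1 - y.1| = 1 ∧ |x.2 - y.2| = 1

/-- The standard-coordinate positions of the particles of type 2 of an `a × b` rectangle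
of 2-tiles in dual coordinates, with corner tile centred at `c`. -/
def dualRect (c : Site) (a b : ℕ) : Set Site :=
  {x | ∃ i j : ℕ, i < a ∧ j < b ∧ x = (c.1 + (i : ℤ) + (j : ℤ), c.2 - (i : ℤ) + (j : ℤ))}

/-- The set of positions of particles of type 2. -/
def set2 (L : ℕ) (η : Config L) : Set Site := {x | η.1 x = 2}

/-- The tile support `[η]`: the union of the tiles of the particles of type 2. -/
def tileSupp (L : ℕ) (η : Config L) : Set Site :=
  {y | ∃ x : Site, η.1 x = 2 ∧ (y = x ∨ Adj x y)}

/-- Dual perimeter of a set of 2-tile positions (total boundary length of the union of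
the corresponding dual unit squares). -/
def dualPerim (S : Set Site) : ℤ :=
  4 * (S.ncard : ℤ) - ({q : Site × Site | q.1 ∈ S ∧ q.2 ∈ S ∧ dualAdj q.1 q.2}.ncard : ℤ)

/-- The circumscribing dual rectangle (side lengths `a`, `b`, corner tile at `c`). -/
def CircumRect (S : Set Site) (c : Site) (a b : ℕ) : Prop :=
  S ⊆ dualRect c a b ∧
    (∃ x ∈ S, x.1 - x.2 = c.1 - c.2) ∧
    (∃ x ∈ S, x.1 - x.2 = c.1 - c.2 + 2 * ((a : ℤ) - 1)) ∧
    (∃ x ∈ S, x.1 + x.2 = c.1 + c.2) ∧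
    (∃ x ∈ S, x.1 + x.2 = c.1 + c.2 + 2 * ((b : ℤ) - 1))

/-- Connectedness of a set of dual unit squares. -/
def DualConnected (S : Set Site) : Prop :=
  ∀ x ∈ S, ∀ y ∈ S, ∃ (n : ℕ) (f : ℕ → Site),
    f 0 = x ∧ f n = y ∧ (∀ k, k ≤ n → f k ∈ S) ∧ ∀ k, k < n → dualAdj (f k) (f (k + 1))

/-- A monotone polyomino with circumscribing rectangle of side lengths `a`, `b`:
its dual perimeter equals the perimeter `2(a+b)` of the circumscribing rectangle. -/
def MonotonePolyWith (S : Set Site) (a b : ℕ) : Prop :=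
  S.Nonempty ∧ DualConnected S ∧
    ∃ c : Site, CircumRect S c a b ∧ dualPerim S = 2 * ((a : ℤ) + (b : ℤ))

/-- `D_A`: 2-tiled configurations with `ℓ*(ℓ*-1)+1` particles of type 2 whose dual tile
support is an `ℓ* × (ℓ*-1)` rectangle plus a protuberance on one of its four sides. -/
def DA (U Δ1 Δ2 : ℝ) (L : ℕ) : Set (Config L) :=
  {η | Tiled L η ∧
    numType L η 2 = lstar U Δ1 Δ2 * (lstar U Δ1 Δ2 - 1) + 1 ∧
    ∃ (c p : Site) (a b : ℕ),
      ((a = lstar U Δ1 Δ2 ∧ b = lstar U Δ1 Δ2 - 1) ∨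
        (a = lstar U Δ1 Δ2 - 1 ∧ b = lstar U Δ1 Δ2)) ∧
      p ∉ dualRect c a b ∧ (∃ q ∈ dualRect c a b, dualAdj q p) ∧
      set2 L η = dualRect c a b ∪ {p}}

/-- `D_B`: 2-tiled configurations with `ℓ*(ℓ*-1)+1` particles of type 2 whose dual tile
support is a monotone polyomino with circumscribing rectangle of side lengths
`ℓ*,ℓ*` or `ℓ*+1,ℓ*-1`. -/
def DB (U Δ1 Δ2 : ℝ) (L : ℕ) : Set (Config L) :=
  {η | Tiled L η ∧
    numType L η 2 = lstar U Δ1 Δ2 * (lstar U Δ1 Δ2 - 1) + 1 ∧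
    (MonotonePolyWith (set2 L η) (lstar U Δ1 Δ2) (lstar U Δ1 Δ2) ∨
      MonotonePolyWith (set2 L η) (lstar U Δ1 Δ2 + 1) (lstar U Δ1 Δ2 - 1) ∨
      MonotonePolyWith (set2 L η) (lstar U Δ1 Δ2 - 1) (lstar U Δ1 Δ2 + 1))}

/-- `D_C`: 2-tiled configurations with `ℓ*(ℓ*-1)+1` particles of type 2 whose dual tile
support is a monotone polyomino whose circumscribing rectangle has perimeter `4ℓ*`. -/
def DC (U Δ1 Δ2 : ℝ) (L : ℕ) : Set (Config L) :=
  {η | Tiled L η ∧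
    numType L η 2 = lstar U Δ1 Δ2 * (lstar U Δ1 Δ2 - 1) + 1 ∧
    ∃ a b : ℕ, a + b = 2 * lstar U Δ1 Δ2 ∧ MonotonePolyWith (set2 L η) a b}

/-- Two configurations agree modulo a translation. -/
def TransEq (L : ℕ) (η η' : Config L) : Prop :=
  ∃ v : Site, ∀ x : Site, η'.1 x = η.1 (x.1 - v.1, x.2 - v.2)

/-- `N*`: the cardinality of the set of protocritical droplets modulo translations. -/
def Nstar (U Δ1 Δ2 : ℝ) (L : ℕ) : ℕ :=
  Nat.card (Quot fun a b : {η : Config L // η ∈ Pset U Δ1 Δ2 L} => TransEq L a.1 b.1)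

/-- A corner particle of type 1: a particle of type 1 with exactly one active bond. -/
def CornerP1 (L : ℕ) (η : Config L) (x : Site) : Prop :=
  η.1 x = 1 ∧ {y : Site | activeBond L η x y}.ncard = 1

/-- A standard configuration with `ℓ*(ℓ*-1)` particles of type 2: a 2-tiled configuration
whose dual tile support is an `ℓ* × (ℓ*-1)` rectangle. -/
def StdRectConfig (U Δ1 Δ2 : ℝ) (L : ℕ) (ρ : Config L) : Prop :=
  Tiled L ρ ∧ numType L ρ 2 = lstar U Δ1 Δ2 * (lstar U Δ1 Δ2 - 1) ∧
    ∃ c : Site, set2 L ρ = dualRect c (lstar U Δ1 Δ2) (lstar U Δ1 Δ2 - 1) ∨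
      set2 L ρ = dualRect c (lstar U Δ1 Δ2 - 1) (lstar U Δ1 Δ2)

/-- A bar of `l` dual squares at dual level `j = jlev`, at positions `i₀ ≤ i < i₀ + l`. -/
def dualBarJ (c : Site) (jlev : ℤ) (i0 l : ℕ) : Set Site :=
  {x | ∃ i : ℕ, i0 ≤ i ∧ i < i0 + l ∧ x = (c.1 + (i : ℤ) + jlev, c.2 - (i : ℤ) + jlev)}

/-- A bar of `l` dual squares at dual level `i = ilev`, at positions `j₀ ≤ j < j₀ + l`. -/
def dualBarI (c : Site) (ilev : ℤ) (j0 l : ℕ) : Set Site :=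
  {x | ∃ j : ℕ, j0 ≤ j ∧ j < j0 + l ∧ x = (c.1 + ilev + (j : ℤ), c.2 - ilev + (j : ℤ))}

/-- A standard polyomino: a quasi-square with possibly a bar attached to one of its
longest sides. -/
def StdPoly (S : Set Site) : Prop :=
  ∃ (c : Site) (a b : ℕ), 0 < a ∧ 0 < b ∧ (a = b ∨ a = b + 1 ∨ b = a + 1) ∧
    (S = dualRect c a b ∨
      ∃ k0 l : ℕ, 0 < l ∧
        ((b ≤ a ∧ k0 + l ≤ a ∧
            (S = dualRect c a b ∪ dualBarJ c (b : ℤ) k0 l ∨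
              S = dualRect c a b ∪ dualBarJ c (-1) k0 l)) ∨
          (a ≤ b ∧ k0 + l ≤ b ∧
            (S = dualRect c a b ∪ dualBarI c (a : ℤ) k0 l ∨
              S = dualRect c a b ∪ dualBarI c (-1) k0 l))))

/-- A standard configuration: a 2-tiled configuration whose dual tile support is a
standard polyomino. -/
def StdConfig (L : ℕ) (η : Config L) : Prop := Tiled L η ∧ StdPoly (set2 L η)

/-- A quasi-standard configuration: obtained from a standard configuration by removing
some (possibly none) of its corner particles of type 1. -/
def QuasiStd (L : ℕ) (η : Config L) : Prop :=
  ∃ ρ : Config L, StdConfig L ρ ∧ ∃ S : Set Site, (∀ x ∈ S, CornerP1 L ρ x) ∧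
    ∀ x : Site, (x ∈ S → η.1 x = 0) ∧ (x ∉ S → η.1 x = ρ.1 x)

/-- The surface `F(η)`. -/
def surface (L : ℕ) (η : Config L) : Set Site :=
  {x | inLam L x ∧ ∃ y, Adj x y ∧ η.1 y = 1}

/-- A good dual corner: an empty site with three neighbouring sites occupied by
particles of type 1. -/
def GoodDualCorner (L : ℕ) (η : Config L) (w : Site) : Prop :=
  η.1 w = 0 ∧ {y : Site | Adj w y ∧ η.1 y = 1}.ncard = 3

/-- Connectedness of two occupied sites through active bonds (same cluster). -/
def BondConn (L : ℕ) (η : Config L) (x y : Site) : Prop :=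
  ∃ (n : ℕ) (f : ℕ → Site), f 0 = x ∧ f n = y ∧ (∀ k, k ≤ n → η.1 (f k) ≠ 0) ∧
    ∀ k, k < n → activeBond L η (f k) (f (k + 1))

/-- A configuration consisting of a single droplet (one cluster). -/
def SingleDroplet (L : ℕ) (η : Config L) : Prop :=
  (∃ x, η.1 x ≠ 0) ∧ ∀ x y, η.1 x ≠ 0 → η.1 y ≠ 0 → BondConn L η x y

/-- The number of droplets (clusters) of a configuration. -/
def nDroplets (L : ℕ) (η : Config L) : ℕ :=
  Nat.card (Quot fun a b : {x : Site // η.1 x ≠ 0} => BondConn L η a.1 b.1)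

/-- A site with a lattice path of empty sites to `∂⁻Λ`. -/
def LatticeConnecting (L : ℕ) (η : Config L) (i : Site) : Prop :=
  ∃ (n : ℕ) (f : ℕ → Site), f 0 = i ∧ inBd L (f n) ∧
    (∀ k, k ≤ n → inLam L (f k)) ∧ (∀ k, k < n → Adj (f k) (f (k + 1))) ∧
    ∀ k, 0 < k → k ≤ n → η.1 (f k) = 0

/-- A path of empty sites of `Λ` for the free particle, starting in `∂⁻Λ`. -/
def FreePath (L : ℕ) (η₀ : Config L) (m : ℕ) (z : ℕ → Site) : Prop :=
  inBd L (z 0) ∧ (∀ k, k ≤ m → inLam L (z k) ∧ η₀.1 (z k) = 0) ∧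
    ∀ k, k < m → Adj (z k) (z (k + 1))

/-- The free particle of type 2 placed at `w` is attached to the droplet `η₀`
(it has at least one active bond). -/
def AttachedAt (L : ℕ) (η₀ : Config L) (w : Site) : Prop :=
  ∃ y, activeBond L (setSite L η₀ w 2) w y

/-- `C*_att(η₀)`: configurations obtained from `C_bd` by moving the free particle of
type 2 along a path of empty sites of `Λ` and attaching it to the droplet `η₀`. -/
def CstarAtt (U Δ1 Δ2 : ℝ) (L : ℕ) (η₀ : Config L) : Set (Config L) :=
  {η | ∃ (m : ℕ) (z : ℕ → Site), FreePath L η₀ m z ∧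
      setSite L η₀ (z 0) 2 ∈ Cbd U Δ1 Δ2 L ∧
      (∀ k, k < m → ¬ AttachedAt L η₀ (z k)) ∧ AttachedAt L η₀ (z m) ∧
      η = setSite L η₀ (z m) 2}

/-- `C*`: configurations obtained from `C_bd` by moving the free particle of type 2
along a path of empty sites of `Λ` without ever attaching it to the droplet. -/
def Cstar (U Δ1 Δ2 : ℝ) (L : ℕ) : Set (Config L) :=
  {η | ∃ η₀ ∈ Pset U Δ1 Δ2 L, ∃ (m : ℕ) (z : ℕ → Site), FreePath L η₀ m z ∧
      setSite L η₀ (z 0) 2 ∈ Cbd U Δ1 Δ2 L ∧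
      (∀ k, k ≤ m → ¬ AttachedAt L η₀ (z k)) ∧
      η = setSite L η₀ (z m) 2}

/-- Membership of an `m × m` square of sites with lower-left corner `c`. -/
def inSquare (c : Site) (m : ℕ) (x : Site) : Prop :=
  c.1 ≤ x.1 ∧ x.1 < c.1 + (m : ℤ) ∧ c.2 ≤ x.2 ∧ x.2 < c.2 + (m : ℤ)

/-- The move of a particle of type 2 from `x` to the neighbouring empty site `y`. -/
def Move2 (L : ℕ) (ξ ξ' : Config L) (x y : Site) : Prop :=
  Adj x y ∧ ξ.1 x = 2 ∧ ξ.1 y = 0 ∧ ξ'.1 x = 0 ∧ ξ'.1 y = 2 ∧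
    ∀ z, z ≠ x → z ≠ y → ξ'.1 z = ξ.1 z

/-- The step `ξ → ξ'` moves a corner particle of type 2 of `η` along the edge where in
`η` it shares a bond with a corner particle of type 1. -/
def CornerStep (L : ℕ) (η ξ ξ' : Config L) : Prop :=
  ∃ x y q : Site, Move2 L ξ ξ' x y ∧ η.1 x = 2 ∧ CornerP1 L η q ∧
    activeBond L η x q ∧
    (y.1 - x.1) * (q.1 - x.1) + (y.2 - x.2) * (q.2 - x.2) = 0

/-- `S(ω)`: the set of maximal-energy configurations of a path. -/
def argmaxSet (U Δ1 Δ2 : ℝ) (L : ℕ) (ω : List (Config L)) : Set (Config L) :=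
  {ξ | ξ ∈ ω ∧ H U Δ1 Δ2 L ξ = maxH U Δ1 Δ2 L ω}

/-- An unessential saddle. -/
def Unessential (U Δ1 Δ2 : ℝ) (L : ℕ) (ζ : Config L) : Prop :=
  ∀ ω, OptPath U Δ1 Δ2 L ω → ζ ∈ ω →
    (argmaxSet U Δ1 Δ2 L ω \ {ζ}).Nonempty ∧
    ∃ ω', OptPath U Δ1 Δ2 L ω' ∧
      argmaxSet U Δ1 Δ2 L ω' ⊆ argmaxSet U Δ1 Δ2 L ω \ {ζ}

/-! Coefficients of the generating functions of Kurz counting polyominoes of minimal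
perimeter: `a(x) = ∏_{j≥1} (1-x^j)^{-1}` (partitions), `s(x) = 1 + ∑_{k≥1} x^{k²}
∏_{j=1}^k (1-x^{2j})^{-1}`, `r(x) = (a(x)⁴ + 3a(x²)²)/4`,
`q(x) = (a(x)⁴ + 3a(x²)² + 2s(x)²a(x²) + 2a(x⁴))/8`. -/

/-- Coefficients of `a(x)`: the number of partitions of `n`. -/
def partCount (n : ℕ) : ℕ := Nat.card (Nat.Partition n)

/-- The number of partitions of `n` into parts of size at most `k`. -/
def partCountLe (k n : ℕ) : ℕ :=
  Nat.card {π : Nat.Partition n // ∀ i ∈ π.parts, i ≤ k}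

/-- Coefficients of `a(x)⁴`. -/
def aPow4Coeff (n : ℕ) : ℕ :=
  ∑ i ∈ Finset.range (n + 1), ∑ j ∈ Finset.range (n + 1 - i),
    ∑ k ∈ Finset.range (n + 1 - i - j),
      partCount i * partCount j * partCount k * partCount (n - i - j - k)

/-- Coefficients of `a(x²)`. -/
def aX2Coeff (n : ℕ) : ℕ := if 2 ∣ n then partCount (n / 2) else 0

/-- Coefficients of `a(x²)²`. -/
def aSqX2Coeff (n : ℕ) : ℕ :=
  if 2 ∣ n then ∑ i ∈ Finset.range (n / 2 + 1), partCount i * partCount (n / 2 - i) else 0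

/-- Coefficients of `a(x⁴)`. -/
def aX4Coeff (n : ℕ) : ℕ := if 4 ∣ n then partCount (n / 4) else 0

/-- Coefficients of `s(x)`: the coefficient of `xⁿ` in `x^{k²} ∏_{j=1}^k (1-x^{2j})^{-1}`
is the number of partitions of `(n-k²)/2` into parts at most `k` (when `n-k²` is even
and nonnegative). -/
def sCoeff (n : ℕ) : ℕ :=
  (if n = 0 then 1 else 0) +
    ∑ k ∈ Finset.Icc 1 n,
      if k ^ 2 ≤ n ∧ 2 ∣ (n - k ^ 2) then partCountLe k ((n - k ^ 2) / 2) else 0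

/-- Coefficients of `s(x)² a(x²)`. -/
def s2aCoeff (n : ℕ) : ℕ :=
  ∑ i ∈ Finset.range (n + 1), ∑ j ∈ Finset.range (n + 1 - i),
    sCoeff i * sCoeff j * aX2Coeff (n - i - j)

/-- `r_n`: the coefficients of `r(x) = (a(x)⁴ + 3a(x²)²)/4`. -/
def rCoeff (n : ℕ) : ℚ := ((aPow4Coeff n : ℚ) + 3 * (aSqX2Coeff n : ℚ)) / 4

/-- `q_n`: the coefficients of `q(x) = (a(x)⁴ + 3a(x²)² + 2s(x)²a(x²) + 2a(x⁴))/8`. -/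
def qCoeff (n : ℕ) : ℚ :=
  ((aPow4Coeff n : ℚ) + 3 * (aSqX2Coeff n : ℚ) + 2 * (s2aCoeff n : ℚ) +
    2 * (aX4Coeff n : ℚ)) / 8


section AuxUnessential

variable (U Δ1 Δ2 : ℝ) (L : ℕ)

lemma le_maxH_of_mem {ω : List (Config L)} {ξ : Config L} (h : ξ ∈ ω) :
    H U Δ1 Δ2 L ξ ≤ maxH U Δ1 Δ2 L ω := by
  have h1 : H U Δ1 Δ2 L ξ ∈ ω.map (H U Δ1 Δ2 L) := List.mem_map_of_mem h
  cases hm : (ω.map (H U Δ1 Δ2 L)).maximum with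
  | bot =>
      rw [List.maximum_eq_bot] at hm
      simp [hm] at h1
  | coe m =>
      have h2 := List.le_maximum_of_mem h1 hm
      simpa [maxH, hm] using h2

lemma exists_mem_eq_maxH {ω : List (Config L)} (h : ω ≠ []) :
    ∃ ξ ∈ ω, H U Δ1 Δ2 L ξ = maxH U Δ1 Δ2 L ω := by
  cases hm : (ω.map (H U Δ1 Δ2 L)).maximum with
  | bot =>
      rw [List.maximum_eq_bot, List.map_eq_nil_iff] at hm
      exact absurd hm h
  | coe m =>
      have h1 : m ∈ ω.map (H U Δ1 Δ2 L) := List.maximum_mem hm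
      obtain ⟨ξ, hξ, hξm⟩ := List.mem_map.1 h1
      exact ⟨ξ, hξ, by simp [maxH, hm, hξm]⟩

lemma H_emptyConfig : H U Δ1 Δ2 L (emptyConfig L) = 0 := by
  have e1 : {x : Site | (emptyConfig L).1 x = 1} = ∅ := by
    ext x; simp [emptyConfig, Fin.ext_iff]
  have e2 : {x : Site | (emptyConfig L).1 x = 2} = ∅ := by
    ext x; simp [emptyConfig, Fin.ext_iff]
  have e3 : {q : Site × Site | activeBond L (emptyConfig L) q.1 q.2} = ∅ := by
    ext q; simp [activeBond, emptyConfig, Fin.ext_iff]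
  simp [H, numType, numBondPairs, e1, e2, e3]

lemma gamma_le_maxH {ω : List (Config L)} {b : Config L} (hb : b ∈ BoxPlus L)
    (hω : IsPath L ω (emptyConfig L) b) :
    Gamma U Δ1 Δ2 L ≤ maxH U Δ1 Δ2 L ω := by
  apply csInf_le
  · refine ⟨0, ?_⟩
    rintro m ⟨η, hη, η', hη', σ, hσ, rfl⟩
    rw [Set.mem_singleton_iff] at hη
    subst hη
    have hmem : emptyConfig L ∈ σ :=
      List.mem_of_mem_head? (by rw [hσ.2.1]; rfl)
    calc (0 : ℝ) = H U Δ1 Δ2 L (emptyConfig L) := (H_emptyConfig U Δ1 Δ2 L).symm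
      _ ≤ maxH U Δ1 Δ2 L σ := le_maxH_of_mem U Δ1 Δ2 L hmem
  · exact ⟨emptyConfig L, rfl, b, hb, ω, hω, rfl⟩

end AuxUnessential

/-- a saddle `ζ` with at most `ℓ*(ℓ*-1)+1` particles of type 2 such that
every optimal path through `ζ` visits `g({□},V^min)` after visiting `ζ` is unessential. -/
theorem unessential_when_g_visited_after
    (U Δ1 Δ2 : ℝ) (L : ℕ)
    (hU : 0 < U) (hΔ1 : 0 < Δ1) (hΔ2 : 0 < Δ2)
    (h1 : Δ1 < U) (h2 : 2 * U < Δ2 - Δ1) (h3 : Δ1 + Δ2 < 4 * U)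
    (hnotint : ∀ n : ℕ, Δ1 / (4 * U - Δ1 - Δ2) ≠ (n : ℝ))
    (hL : 2 * lstar U Δ1 Δ2 + 2 < L)
    (ζ : Config L)
    (hn : n2in L ζ ≤ lstar U Δ1 Δ2 * (lstar U Δ1 Δ2 - 1) + 1)
    (hH : H U Δ1 Δ2 L ζ = Gamma U Δ1 Δ2 L)
    (hvisit : ∀ ω : List (Config L), OptPath U Δ1 Δ2 L ω → ζ ∈ ω →
      ∃ (i j : ℕ) (hi : i < ω.length) (hj : j < ω.length), i < j ∧
        ω.get ⟨i, hi⟩ = ζ ∧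
        ω.get ⟨j, hj⟩ ∈ gset U Δ1 Δ2 L {emptyConfig L} (VmanMin U Δ1 Δ2 L (lstar U Δ1 Δ2 * (lstar U Δ1 Δ2 - 1) + 1))) :
    Unessential U Δ1 Δ2 L ζ := by
  classical
  intro ω hωopt hζω
  have hmaxω : maxH U Δ1 Δ2 L ω = Gamma U Δ1 Δ2 L := hωopt.choose_spec.2.2
  have base : ∀ σ : List (Config L), ζ ∉ σ → OptPath U Δ1 Δ2 L σ →
      (∀ ξ ∈ σ, H U Δ1 Δ2 L ξ = Gamma U Δ1 Δ2 L → ξ ∈ argmaxSet U Δ1 Δ2 L ω) →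
      ∃ σ', OptPath U Δ1 Δ2 L σ' ∧ (argmaxSet U Δ1 Δ2 L σ').Nonempty ∧
        argmaxSet U Δ1 Δ2 L σ' ⊆ argmaxSet U Δ1 Δ2 L ω \ {ζ} := by
    intro σ hζσ hopt hinv
    obtain ⟨b, hb, hpath, hmax⟩ := hopt
    obtain ⟨ξ, hξσ, hξH⟩ := exists_mem_eq_maxH U Δ1 Δ2 L hpath.1
    refine ⟨σ, ⟨b, hb, hpath, hmax⟩, ⟨ξ, hξσ, hξH⟩, ?_⟩
    rintro ξ' ⟨hξ'σ, hξ'H⟩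
    refine ⟨hinv ξ' hξ'σ (by rw [hξ'H, hmax]), ?_⟩
    simp only [Set.mem_singleton_iff]
    rintro rfl
    exact hζσ hξ'σ
  have main : ∀ n : ℕ, ∀ σ : List (Config L), σ.count ζ ≤ n →
      OptPath U Δ1 Δ2 L σ →
      (∀ ξ ∈ σ, H U Δ1 Δ2 L ξ = Gamma U Δ1 Δ2 L → ξ ∈ argmaxSet U Δ1 Δ2 L ω) →
      ∃ σ', OptPath U Δ1 Δ2 L σ' ∧ (argmaxSet U Δ1 Δ2 L σ').Nonempty ∧
        argmaxSet U Δ1 Δ2 L σ' ⊆ argmaxSet U Δ1 Δ2 L ω \ {ζ} := by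
    intro n
    induction n with
    | zero =>
        intro σ hcnt hopt hinv
        refine base σ (fun h => ?_) hopt hinv
        have := List.count_pos_iff.2 h
        omega
    | succ n ih =>
        intro σ hcnt hopt hinv
        by_cases hζσ : ζ ∈ σ
        · obtain ⟨b, hb, hpath, hmax⟩ := hopt
          obtain ⟨i, j, hi, hj, hij, hgeti, hgetj⟩ :=
            hvisit σ ⟨b, hb, hpath, hmax⟩ hζσ
          obtain ⟨-, ζ₀, hζ₀, ρ, hρpath, hρall⟩ := hgetj
          rw [Set.mem_singleton_iff] at hζ₀
          subst hζ₀
          have hρlow : ∀ ξ ∈ ρ, H U Δ1 Δ2 L ξ < Gamma U Δ1 Δ2 L :=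
            fun ξ h => (hρall ξ h).2.2
          have hρne : ρ ≠ [] := hρpath.1
          rcases Nat.lt_or_ge (j + 1) σ.length with hj1 | hj1
          · -- splice: σ' = ρ ++ σ.drop (j+1)
            have hdroplen : (σ.drop (j + 1)).length = σ.length - (j + 1) :=
              List.length_drop
            have hdropne : σ.drop (j + 1) ≠ [] := by
              intro h
              rw [h] at hdroplen
              simp at hdroplen
              omega
            set σ' := ρ ++ σ.drop (j + 1) with hσ'def
            have hne' : σ' ≠ [] := by
              simp [hσ'def, hρne]
            have hhead : σ'.head? = some (emptyConfig L) := by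
              rw [hσ'def, List.head?_append_of_ne_nil _ hρne, hρpath.2.1]
            have hlast : σ'.getLast? = some b := by
              rw [hσ'def, List.getLast?_append_of_ne_nil _ hdropne]
              have h2 : σ.getLast? = (σ.drop (j + 1)).getLast? := by
                conv_lhs => rw [← List.take_append_drop (j + 1) σ]
                exact List.getLast?_append_of_ne_nil _ hdropne
              rw [← h2, hpath.2.2.1]
            have hchain : σ'.Chain' (Move L) := by
              refine List.IsChain.append hρpath.2.2.2 (hpath.2.2.2.drop (j + 1)) ?_
              intro x hx y hy
              have hx' : x = σ.get ⟨j, hj⟩ := by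
                rw [hρpath.2.2.1] at hx
                exact (Option.mem_some_iff.1 hx).symm
              have hhd : (σ.drop (j + 1)).head? = some (σ.get ⟨j + 1, hj1⟩) := by
                rw [List.head?_drop, List.getElem?_eq_getElem hj1]
                rfl
              have hy' : y = σ.get ⟨j + 1, hj1⟩ := by
                rw [hhd] at hy
                exact (Option.mem_some_iff.1 hy).symm
              subst hx' hy'
              exact List.isChain_iff_getElem.1 hpath.2.2.2 j (by omega)
            have hpath' : IsPath L σ' (emptyConfig L) b := ⟨hne', hhead, hlast, hchain⟩
            have hle : ∀ ξ ∈ σ', H U Δ1 Δ2 L ξ ≤ Gamma U Δ1 Δ2 L := by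
              intro ξ hξ
              rcases List.mem_append.1 hξ with h | h
              · exact le_of_lt (hρlow ξ h)
              · have hξσ' : ξ ∈ σ := List.drop_subset _ _ h
                calc H U Δ1 Δ2 L ξ ≤ maxH U Δ1 Δ2 L σ := le_maxH_of_mem U Δ1 Δ2 L hξσ'
                  _ = Gamma U Δ1 Δ2 L := hmax
            have hmax' : maxH U Δ1 Δ2 L σ' = Gamma U Δ1 Δ2 L := by
              obtain ⟨ξm, hξm, hξmH⟩ := exists_mem_eq_maxH U Δ1 Δ2 L hne'
              refine le_antisymm ?_ (gamma_le_maxH U Δ1 Δ2 L hb hpath')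
              rw [← hξmH]
              exact hle ξm hξm
            have hopt' : OptPath U Δ1 Δ2 L σ' := ⟨b, hb, hpath', hmax'⟩
            have hinv' : ∀ ξ ∈ σ', H U Δ1 Δ2 L ξ = Gamma U Δ1 Δ2 L →
                ξ ∈ argmaxSet U Δ1 Δ2 L ω := by
              intro ξ hξ hξH
              rcases List.mem_append.1 hξ with h | h
              · exact absurd hξH (ne_of_lt (hρlow ξ h))
              · exact hinv ξ (List.drop_subset _ _ h) hξH
            have hcnt' : σ'.count ζ ≤ n := by
              have hζρ : ρ.count ζ = 0 := by
                rw [List.count_eq_zero]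
                intro h
                exact absurd hH (ne_of_lt (hρlow ζ h))
              have hζtake : ζ ∈ σ.take (j + 1) := by
                have hilen : i < (σ.take (j + 1)).length := by
                  rw [List.length_take]
                  omega
                have heq : (σ.take (j + 1))[i]'hilen = ζ := by
                  rw [List.getElem_take]
                  exact hgeti
                rw [← heq]
                exact List.getElem_mem _
              have h1 : 0 < (σ.take (j + 1)).count ζ := List.count_pos_iff.2 hζtake
              have h2 : σ.count ζ = (σ.take (j + 1)).count ζ + (σ.drop (j + 1)).count ζ := by
                conv_lhs => rw [← List.take_append_drop (j + 1) σ]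
                exact List.count_append
              have h3 : σ'.count ζ = (σ.drop (j + 1)).count ζ := by
                rw [hσ'def, List.count_append, hζρ]
                omega
              omega
            exact ih σ' hcnt' hopt' hinv'
          · -- the entrance of gset is the endpoint of σ: contradiction
            exfalso
            have hjv : j = σ.length - 1 := by omega
            subst hjv
            have hjeq : σ.getLast? = some (σ.get ⟨σ.length - 1, hj⟩) := by
              have hne : σ ≠ [] := hpath.1
              rw [List.getLast?_eq_getLast_of_ne_nil hne, List.getLast_eq_getElem]
              rfl
            have hbη : b = σ.get ⟨σ.length - 1, hj⟩ := by
              rw [hpath.2.2.1] at hjeq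
              exact Option.some_injective _ hjeq
            have hρpath' : IsPath L ρ (emptyConfig L) b := by
              rw [hbη]
              exact hρpath
            have hge : Gamma U Δ1 Δ2 L ≤ maxH U Δ1 Δ2 L ρ :=
              gamma_le_maxH U Δ1 Δ2 L hb hρpath'
            obtain ⟨ξm, hξm, hξmH⟩ := exists_mem_eq_maxH U Δ1 Δ2 L hρne
            have := hρlow ξm hξm
            rw [hξmH] at this
            exact absurd hge (not_le.2 this)
        · exact base σ hζσ hopt hinv
  obtain ⟨σ', hσ'opt, hσ'ne, hσ'sub⟩ :=
    main (ω.count ζ) ω le_rfl hωopt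
      (fun ξ h hHξ => ⟨h, by rw [hHξ, hmaxω]⟩)
  exact ⟨hσ'ne.mono hσ'sub, σ', hσ'opt, hσ'sub⟩


end TwoTypeKawasaki
end
end

section
/- The set C_bd (the minimal set of configurations in the essential gate G(□,⊞) through which all optimal paths from □ to ⊞ first enter G(□,⊞)) is a minimal gate for the transition □ → ⊞. -/
noncomputable section

namespace TwoTypeKawasaki

section MinGateProof

private lemma lam_finite (L : ℕ) : {x : Site | inLam L x}.Finite := by
  apply Set.Finite.subset ((Set.finite_Icc (-(L:ℤ)-2) ((L:ℤ)+2)).prod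
    (Set.finite_Icc (-(L:ℤ)-2) ((L:ℤ)+2)))
  rintro ⟨a, b⟩ ⟨h1, h2, h3, h4⟩
  simp only [Set.mem_prod, Set.mem_Icc]
  omega

instance configFinite (L : ℕ) : Finite (Config L) := by
  have : Finite {x : Site // inLam L x} := (lam_finite L).to_subtype
  apply Finite.of_injective (fun η : Config L => fun x : {x : Site // inLam L x} => η.1 x.1)
  intro a b h
  apply Subtype.ext
  funext x
  by_cases hx : inLam L x
  · exact congrFun h ⟨x, hx⟩
  · rw [a.2 x hx, b.2 x hx]

variable {U Δ1 Δ2 : ℝ} {L : ℕ}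

private lemma exists_maxH_mem {ω : List (Config L)} (hne : ω ≠ []) :
    ∃ x ∈ ω, H U Δ1 Δ2 L x = maxH U Δ1 Δ2 L ω := by
  have hne' : ω.map (H U Δ1 Δ2 L) ≠ [] := by simpa using hne
  obtain ⟨m, hm⟩ : ∃ m, (ω.map (H U Δ1 Δ2 L)).maximum = some m := by
    cases hm : (ω.map (H U Δ1 Δ2 L)).maximum with
    | bot => exact absurd (List.maximum_eq_bot.mp hm) hne'
    | coe m => exact ⟨m, rfl⟩
  obtain ⟨x, hx, hfx⟩ := List.mem_map.mp (List.maximum_mem hm)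
  refine ⟨x, hx, ?_⟩
  rw [maxH, hm, hfx]
  rfl

private lemma le_maxH {ω : List (Config L)} {x : Config L} (hx : x ∈ ω) :
    H U Δ1 Δ2 L x ≤ maxH U Δ1 Δ2 L ω := by
  obtain ⟨m, hm⟩ : ∃ m, (ω.map (H U Δ1 Δ2 L)).maximum = some m := by
    cases hm : (ω.map (H U Δ1 Δ2 L)).maximum with
    | bot =>
      rw [List.maximum_eq_bot, List.map_eq_nil_iff] at hm
      rw [hm] at hx
      simp at hx
    | coe m => exact ⟨m, rfl⟩
  have := List.le_maximum_of_mem (List.mem_map_of_mem (f := H U Δ1 Δ2 L) hx) hm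
  rw [maxH, hm]
  exact this

private lemma maxH_le {ω : List (Config L)} (hne : ω ≠ []) {c : ℝ}
    (h : ∀ x ∈ ω, H U Δ1 Δ2 L x ≤ c) : maxH U Δ1 Δ2 L ω ≤ c := by
  obtain ⟨x, hx, hfx⟩ := exists_maxH_mem hne
  exact hfx ▸ h x hx

private lemma isPath_take {ω : List (Config L)} {a b : Config L}
    (h : IsPath L ω a b) {k : ℕ} (hk : k < ω.length) :
    IsPath L (ω.take (k+1)) a (ω.get ⟨k, hk⟩) := by
  obtain ⟨hne, hh, hl, hc⟩ := h
  have hlen : (ω.take (k+1)).length = k+1 := by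
    rw [List.length_take]; omega
  refine ⟨?_, ?_, ?_, hc.take _⟩
  · intro h0; rw [h0] at hlen; simp at hlen
  · cases ω with
    | nil => simp at hne
    | cons x t => simpa using hh
  · rw [List.getLast?_eq_getElem?, hlen]
    simp only [Nat.add_sub_cancel]
    rw [List.getElem?_take]
    simp [List.getElem?_eq_getElem hk, List.get_eq_getElem]

private lemma isPath_drop {ω : List (Config L)} {a b : Config L}
    (h : IsPath L ω a b) {k : ℕ} (hk : k < ω.length) :
    IsPath L (ω.drop k) (ω.get ⟨k, hk⟩) b := by
  obtain ⟨hne, hh, hl, hc⟩ := h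
  have hlen : (ω.drop k).length = ω.length - k := List.length_drop
  refine ⟨?_, ?_, ?_, hc.drop _⟩
  · intro h0
    rw [h0] at hlen
    simp only [List.length_nil] at hlen
    omega
  · rw [List.head?_drop, List.getElem?_eq_getElem hk]
    simp [List.get_eq_getElem]
  · rw [List.getLast?_eq_getElem?] at hl ⊢
    rw [hlen, List.getElem?_drop]
    have heq : k + (ω.length - k - 1) = ω.length - 1 := by omega
    rw [heq]
    exact hl

private lemma isPath_append {ω1 ω2 : List (Config L)} {a c b : Config L}
    (h1 : IsPath L ω1 a c) (h2 : IsPath L ω2 c b) :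
    IsPath L (ω1 ++ ω2.tail) a b := by
  obtain ⟨hne1, hh1, hl1, hc1⟩ := h1
  obtain ⟨hne2, hh2, hl2, hc2⟩ := h2
  cases ω2 with
  | nil => exact absurd rfl hne2
  | cons c2 t2 =>
    have hc2' : c2 = c := by simpa using hh2
    subst hc2'
    cases t2 with
    | nil =>
      have hb : c2 = b := by simpa using hl2
      subst hb
      have heq : ω1 ++ (c2 :: ([] : List (Config L))).tail = ω1 := by simp
      rw [heq]
      exact ⟨hne1, hh1, hl1, hc1⟩
    | cons d t =>
      have hmove := List.isChain_cons_cons.mp hc2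
      refine ⟨by simp [hne1], ?_, ?_, ?_⟩
      · show (ω1 ++ (d :: t)).head? = some a
        rw [List.head?_append, hh1]
        rfl
      · show (ω1 ++ (d :: t)).getLast? = some b
        rw [List.getLast?_append]
        have hdt : (d :: t).getLast? = some b := by
          rw [← List.getLast?_cons_cons]
          exact hl2
        rw [hdt]
        rfl
      · show (ω1 ++ (d :: t)).Chain' (Move L)
        change List.IsChain (Move L) (ω1 ++ d :: t)
        rw [List.isChain_append]
        refine ⟨hc1, hmove.2, ?_⟩
        intro x hx y hy
        rw [hl1] at hx
        simp only [Option.mem_def, Option.some.injEq] at hx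
        simp only [List.head?_cons, Option.mem_def, Option.some.injEq] at hy
        exact hy ▸ hx ▸ hmove.1

private lemma mem_take_get {α : Type*} {l : List α} {n : ℕ} {x : α} (hx : x ∈ l.take n) :
    ∃ (j : ℕ) (h : j < l.length), j < n ∧ l.get ⟨j, h⟩ = x := by
  obtain ⟨⟨j, hj⟩, hget⟩ := List.mem_iff_get.mp hx
  have hj' : j < l.length ∧ j < n := by
    rw [List.length_take] at hj; omega
  refine ⟨j, hj'.1, hj'.2, ?_⟩
  rw [← hget]
  simp [List.get_eq_getElem]

private lemma mem_drop_get {α : Type*} {l : List α} {n : ℕ} {x : α} (hx : x ∈ l.drop n) :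
    ∃ (j : ℕ) (h : j < l.length), n ≤ j ∧ l.get ⟨j, h⟩ = x := by
  obtain ⟨⟨j, hj⟩, hget⟩ := List.mem_iff_get.mp hx
  have hj' : n + j < l.length := by
    rw [List.length_drop] at hj; omega
  refine ⟨n + j, hj', Nat.le_add_right _ _, ?_⟩
  simp only [List.get_eq_getElem, List.getElem_drop] at hget ⊢
  exact hget

private lemma gamma_le {b : Config L} (hb : b ∈ BoxPlus L) {ρ : List (Config L)}
    (hρ : IsPath L ρ (emptyConfig L) b) :
    Gamma U Δ1 Δ2 L ≤ maxH U Δ1 Δ2 L ρ := by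
  unfold Gamma PhiSet
  apply csInf_le
  · apply Set.Finite.bddBelow
    apply Set.Finite.subset (Set.finite_range (H U Δ1 Δ2 L))
    rintro m ⟨η, -, η', -, ω, hω, rfl⟩
    obtain ⟨x, -, hx⟩ := exists_maxH_mem hω.1
    exact ⟨x, hx⟩
  · exact ⟨emptyConfig L, rfl, b, hb, ρ, hρ, rfl⟩

private lemma optPath_mk {b : Config L} (hb : b ∈ BoxPlus L) {ρ : List (Config L)}
    (hρ : IsPath L ρ (emptyConfig L) b) (hm : maxH U Δ1 Δ2 L ρ ≤ Gamma U Δ1 Δ2 L) :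
    OptPath U Δ1 Δ2 L ρ :=
  ⟨b, hb, hρ, le_antisymm hm (gamma_le hb hρ)⟩

private lemma exists_minGate (U Δ1 Δ2 : ℝ) (L : ℕ) : ∃ W, IsMinGate U Δ1 Δ2 L W := by
  classical
  have hSgate : IsGate U Δ1 Δ2 L {ζ | Saddle U Δ1 Δ2 L ζ} := by
    refine ⟨fun ζ hζ => hζ, fun ω hω => ?_⟩
    obtain ⟨bb, hbb, hp, hmax⟩ := hω
    obtain ⟨x, hxω, hx⟩ := exists_maxH_mem hp.1
    exact ⟨x, ⟨by rw [hx, hmax], ω, ⟨bb, hbb, hp, hmax⟩, hxω⟩, hxω⟩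
  have hSne : Set.Nonempty {n | ∃ W, IsGate U Δ1 Δ2 L W ∧ W.ncard = n} :=
    ⟨_, _, hSgate, rfl⟩
  obtain ⟨W, hW, hWcard⟩ := Nat.sInf_mem hSne
  refine ⟨W, hW, fun W' hss => ?_⟩
  by_contra hcon
  push_neg at hcon
  have hW'gate : IsGate U Δ1 Δ2 L W' := by
    refine ⟨fun ζ hζ => hW.1 ζ (hss.1 hζ), fun ω hω => ?_⟩
    obtain ⟨ζ, hζ1, hζ2⟩ := hcon ω hω
    exact ⟨ζ, hζ1, hζ2⟩
  have hlt : W'.ncard < W.ncard := Set.ncard_lt_ncard hss (Set.toFinite W)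
  have hle : sInf {n | ∃ W, IsGate U Δ1 Δ2 L W ∧ W.ncard = n} ≤ W'.ncard :=
    Nat.sInf_le ⟨W', hW'gate, rfl⟩
  omega

private lemma essGate_gate (U Δ1 Δ2 : ℝ) (L : ℕ) :
    IsGate U Δ1 Δ2 L (EssGate U Δ1 Δ2 L) := by
  obtain ⟨W₀, hW₀⟩ := exists_minGate U Δ1 Δ2 L
  constructor
  · rintro ζ ⟨W, hW, hζ⟩
    exact hW.1.1 ζ hζ
  · intro ω hω
    obtain ⟨ζ, hζ, hζω⟩ := hW₀.1.2 ω hω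
    exact ⟨ζ, ⟨W₀, hW₀, hζ⟩, hζω⟩

private lemma exists_firstIn {Y : Set (Config L)} {ω : List (Config L)}
    (h : ∃ (i : ℕ) (hi : i < ω.length), ω.get ⟨i, hi⟩ ∈ Y) :
    ∃ η ∈ ω, FirstIn ω Y η := by
  classical
  have hP : ∃ j, ∃ hj : j < ω.length, ω.get ⟨j, hj⟩ ∈ Y := h
  obtain ⟨hi, hmem⟩ := Nat.find_spec hP
  refine ⟨ω.get ⟨Nat.find hP, hi⟩, List.get_mem _ _, Nat.find hP, hi, rfl, hmem, ?_⟩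
  intro j hj hmemj
  exact Nat.find_min hP hj ⟨hj.trans hi, hmemj⟩

private lemma cbd_subset_essGate : Cbd U Δ1 Δ2 L ⊆ EssGate U Δ1 Δ2 L := by
  rintro η ⟨ω, hω, i, hi, hget, hmem, hprev⟩
  exact hmem

private lemma cbd_gate (U Δ1 Δ2 : ℝ) (L : ℕ) : IsGate U Δ1 Δ2 L (Cbd U Δ1 Δ2 L) := by
  constructor
  · intro ζ hζ
    obtain ⟨W, hW, hζW⟩ := cbd_subset_essGate hζ
    exact hW.1.1 ζ hζW
  · intro ω hω
    obtain ⟨ζ, hζG, hζω⟩ := (essGate_gate U Δ1 Δ2 L).2 ω hω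
    obtain ⟨⟨i, hi⟩, hget⟩ := List.mem_iff_get.mp hζω
    obtain ⟨η, hηω, hfirst⟩ := exists_firstIn ⟨i, hi, by rw [hget]; exact hζG⟩
    exact ⟨η, ⟨ω, hω, hfirst⟩, hηω⟩

end MinGateProof

/-- `C_bd` is a minimal gate for the transition `□ → ⊞`. -/
theorem Cbd_is_minimal_gate
    (U Δ1 Δ2 : ℝ) (L : ℕ)
    (hU : 0 < U) (hΔ1 : 0 < Δ1) (hΔ2 : 0 < Δ2) :
    IsMinGate U Δ1 Δ2 L (Cbd U Δ1 Δ2 L) := by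
  classical
  refine ⟨cbd_gate U Δ1 Δ2 L, ?_⟩
  intro W' hss
  obtain ⟨ζ, hζCbd0, hζW'⟩ := Set.exists_of_ssubset hss
  obtain ⟨ω, hωopt, i, hi, hωget, hζG, hωprev⟩ := hζCbd0
  have hζCbd0 : ζ ∈ Cbd U Δ1 Δ2 L := ⟨ω, hωopt, i, hi, hωget, hζG, hωprev⟩
  obtain ⟨W, hWmin, hζW⟩ := hζG
  obtain ⟨τ, hτopt, hτavoid⟩ := hWmin.2 (W \ {ζ}) (Set.sdiff_singleton_ssubset.mpr hζW)
  have hζτ : ζ ∈ τ := by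
    obtain ⟨w, hwW, hwτ⟩ := hWmin.1.2 τ hτopt
    by_cases hw : w = ζ
    · exact hw ▸ hwτ
    · exact absurd hwτ (hτavoid w ⟨hwW, hw⟩)
  obtain ⟨bτ, hbτ, hτpath, hτmax⟩ := hτopt
  obtain ⟨bω, hbω, hωpath, hωmax⟩ := hωopt
  set P : ℕ → Prop := fun j => ∃ hj : j < τ.length, τ.get ⟨j, hj⟩ ∈ Cbd U Δ1 Δ2 L with hPdef
  have hPex : ∃ j, P j := by
    obtain ⟨⟨j, hj⟩, hget⟩ := List.mem_iff_get.mp hζτ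
    exact ⟨j, hj, by rw [hget]; exact hζCbd0⟩
  obtain ⟨j₀, hPj₀⟩ := hPex
  set k := Nat.findGreatest P τ.length with hkdef
  have hPk : P k := Nat.findGreatest_spec (le_of_lt hPj₀.1) hPj₀
  obtain ⟨hk, hτk⟩ := hPk
  have hkmax : ∀ (j : ℕ) (hj : j < τ.length), τ.get ⟨j, hj⟩ ∈ Cbd U Δ1 Δ2 L → j ≤ k := by
    intro j hj hmem
    by_contra hgt
    exact Nat.findGreatest_is_greatest (P := P) (n := τ.length) (by omega)
      (le_of_lt hj) ⟨hj, hmem⟩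
  have htail : (τ.drop k).tail = τ.drop (k+1) := List.tail_drop
  have hdropCbd : ∀ x ∈ τ.drop (k+1), x ∉ Cbd U Δ1 Δ2 L := by
    intro x hx hxCbd
    obtain ⟨j, hj, hkj, hget⟩ := mem_drop_get hx
    have := hkmax j hj (by rw [hget]; exact hxCbd)
    omega
  have hτkζ : τ.get ⟨k, hk⟩ = ζ := by
    by_contra hne
    obtain ⟨σ, hσopt, m, hm, hσget, hξG, hσprev⟩ := hτk
    obtain ⟨bσ, hbσ, hσpath, hσmax⟩ := hσopt
    have hpath1 : IsPath L (σ.take (m+1)) (emptyConfig L) (τ.get ⟨k, hk⟩) := by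
      have h' := isPath_take hσpath hm
      rwa [hσget] at h'
    have hpath2 : IsPath L (τ.drop k) (τ.get ⟨k, hk⟩) bτ := isPath_drop hτpath hk
    have hpath' : IsPath L (σ.take (m+1) ++ (τ.drop k).tail) (emptyConfig L) bτ :=
      isPath_append hpath1 hpath2
    have hmax' : maxH U Δ1 Δ2 L (σ.take (m+1) ++ (τ.drop k).tail) ≤ Gamma U Δ1 Δ2 L := by
      apply maxH_le hpath'.1
      intro x hx
      rcases List.mem_append.mp hx with hx1 | hx2
      · obtain ⟨j, hj, hjm, hget⟩ := mem_take_get hx1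
        calc H U Δ1 Δ2 L x ≤ maxH U Δ1 Δ2 L σ := le_maxH (hget ▸ List.get_mem σ ⟨j, hj⟩)
          _ = _ := hσmax
      · rw [htail] at hx2
        obtain ⟨j, hj, hkj, hget⟩ := mem_drop_get hx2
        calc H U Δ1 Δ2 L x ≤ maxH U Δ1 Δ2 L τ := le_maxH (hget ▸ List.get_mem τ ⟨j, hj⟩)
          _ = _ := hτmax
    have hopt' : OptPath U Δ1 Δ2 L (σ.take (m+1) ++ (τ.drop k).tail) :=
      optPath_mk hbτ hpath' hmax'
    obtain ⟨w, hwW, hwmem⟩ := hWmin.1.2 _ hopt'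
    have hwEss : w ∈ EssGate U Δ1 Δ2 L := ⟨W, hWmin, hwW⟩
    rcases List.mem_append.mp hwmem with hw1 | hw2
    · obtain ⟨j, hj, hjm, hget⟩ := mem_take_get hw1
      rcases Nat.lt_or_ge j m with hjlt | hjge
      · exact hσprev j hjlt (by rw [hget]; exact hwEss)
      · have hjm' : j = m := by omega
        subst hjm'
        have hwξ : w = τ.get ⟨k, hk⟩ := by rw [← hget]; exact hσget
        refine hτavoid (τ.get ⟨k, hk⟩) ⟨hwξ ▸ hwW, by simpa using hne⟩ ?_
        exact List.get_mem τ ⟨k, hk⟩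
    · rw [htail] at hw2
      obtain ⟨j, hj, hkj, hget⟩ := mem_drop_get hw2
      have hwτ : w ∈ τ := hget ▸ List.get_mem τ ⟨j, hj⟩
      have hwζ : w = ζ := by
        by_contra hwne
        exact hτavoid w ⟨hwW, by simpa using hwne⟩ hwτ
      have hjk : j ≤ k := hkmax j hj (by rw [hget, hwζ]; exact hζCbd0)
      omega
  have hpath1 : IsPath L (ω.take (i+1)) (emptyConfig L) ζ := by
    have h' := isPath_take hωpath hi
    rwa [hωget] at h'
  have hpath2 : IsPath L (τ.drop k) ζ bτ := by
    have h' := isPath_drop hτpath hk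
    rwa [hτkζ] at h'
  have hpath'' : IsPath L (ω.take (i+1) ++ (τ.drop k).tail) (emptyConfig L) bτ :=
    isPath_append hpath1 hpath2
  refine ⟨ω.take (i+1) ++ (τ.drop k).tail, ?_, ?_⟩
  · apply optPath_mk hbτ hpath''
    apply maxH_le hpath''.1
    intro x hx
    rcases List.mem_append.mp hx with hx1 | hx2
    · obtain ⟨j, hj, hji, hget⟩ := mem_take_get hx1
      calc H U Δ1 Δ2 L x ≤ maxH U Δ1 Δ2 L ω := le_maxH (hget ▸ List.get_mem ω ⟨j, hj⟩)
        _ = _ := hωmax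
    · rw [htail] at hx2
      obtain ⟨j, hj, hkj, hget⟩ := mem_drop_get hx2
      calc H U Δ1 Δ2 L x ≤ maxH U Δ1 Δ2 L τ := le_maxH (hget ▸ List.get_mem τ ⟨j, hj⟩)
        _ = _ := hτmax
  · intro x hxW' hxmem
    rcases List.mem_append.mp hxmem with hx1 | hx2
    · obtain ⟨j, hj, hji, hget⟩ := mem_take_get hx1
      rcases Nat.lt_or_ge j i with hjlt | hjge
      · exact hωprev j hjlt (by rw [hget]; exact cbd_subset_essGate (hss.1 hxW'))
      · have hji' : j = i := by omega
        subst hji'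
        have hxζ : x = ζ := by rw [← hget]; exact hωget
        exact hζW' (hxζ ▸ hxW')
    · rw [htail] at hx2
      exact hdropCbd x hx2 (hss.1 hxW')


end TwoTypeKawasaki
end
end
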